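/- Let A be a complex unital Banach algebra, p ∈ A a nonzero idempotent that is not invertible, and suppose q is another idempotent such that there exists a continuous path of idempotents in A from p to q. Then q = v p v⁻¹ for some v in the principal component G₁(A) of the invertible group. -/
import Mathlib


noncomputable section

/-- A unit close to `1` lies in the connected component of `1` in `Aˣ`. -/
lemma mem_cc_one_of_norm_lt {A : Type*} [NormedRing A] [NormedAlgebra ℂ A] [CompleteSpace A]
    (v : Aˣ) (h : ‖(1 : A) - (v : A)‖ < 1) : v ∈ connectedComponent (1 : Aˣ) := by
  set x : A := 1 - (v : A) with hx
  have hbound : ∀ s : unitInterval, ‖((s : ℝ) : ℂ) • x‖ < 1 := by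
    intro s
    have h1 : ‖((s : ℝ) : ℂ) • x‖ = |(s : ℝ)| * ‖x‖ := by
      rw [norm_smul, Complex.norm_real, Real.norm_eq_abs]
    rw [h1]
    have hs : |(s : ℝ)| ≤ 1 := abs_le.2 ⟨by linarith [s.2.1], s.2.2⟩
    calc |(s : ℝ)| * ‖x‖ ≤ 1 * ‖x‖ := by
          exact mul_le_mul_of_nonneg_right hs (norm_nonneg _)
      _ = ‖x‖ := one_mul _
      _ < 1 := h
  let f : unitInterval → Aˣ := fun s => Units.oneSub (((s : ℝ) : ℂ) • x) (hbound s)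
  have hfval : ∀ s, (f s : A) = 1 - ((s : ℝ) : ℂ) • x := fun s => rfl
  have hcont : Continuous f := by
    rw [Units.continuous_iff]
    constructor
    · have : Continuous fun s : unitInterval => (1 : A) - ((s : ℝ) : ℂ) • x := by
        fun_prop
      exact this
    · have hval : Continuous fun s : unitInterval => ((f s : A)) := by
        simp only [hfval]; fun_prop
      have hc2 : Continuous fun s : unitInterval => Ring.inverse ((f s : A)) :=
        continuous_iff_continuousAt.2 fun u =>
          ContinuousAt.comp (g := Ring.inverse) (f := fun s : unitInterval => ((f s : A))) (x := u) (NormedRing.inverse_continuousAt (f u)) hval.continuousAt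
      simpa [Ring.inverse_unit] using hc2
  have hpath : Joined (1 : Aˣ) v := by
    refine ⟨⟨⟨f, hcont⟩, ?_, ?_⟩⟩
    · apply Units.ext
      simp [hfval]
    · apply Units.ext
      simp [hfval, hx]
  exact pathComponent_subset_component _ hpath

/-- Nearby idempotents are conjugate by a unit in the connected component of `1`. -/
lemma similar_of_close {A : Type*} [NormedRing A] [NormedAlgebra ℂ A] [CompleteSpace A]
    (e f : A) (he : IsIdempotentElem e) (hf : IsIdempotentElem f)
    (h : ‖f - e‖ * (‖f‖ + ‖e‖) < 1) :
    ∃ v : Aˣ, v ∈ connectedComponent (1 : Aˣ) ∧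
      f = (v : A) * e * ((v⁻¹ : Aˣ) : A) := by
  set w : A := f * e + (1 - f) * (1 - e) with hw
  have hf' : f * f = f := hf
  have he' : e * e = e := he
  have hdiff : (1 : A) - w = f * (f - e) + (e - f) * e := by
    have hh : f * (f - e) + (e - f) * e = f * f + e * e - 2 * (f * e) := by noncomm_ring
    rw [hh, hf', he', hw]; noncomm_ring
  have hnorm : ‖(1 : A) - w‖ < 1 := by
    calc ‖(1 : A) - w‖ ≤ ‖f * (f - e)‖ + ‖(e - f) * e‖ := by
          rw [hdiff]; exact norm_add_le _ _
      _ ≤ ‖f‖ * ‖f - e‖ + ‖e - f‖ * ‖e‖ :=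
          add_le_add (norm_mul_le _ _) (norm_mul_le _ _)
      _ = ‖f - e‖ * (‖f‖ + ‖e‖) := by rw [norm_sub_rev e f]; ring
      _ < 1 := h
  have hnorm' : ‖(1 : A) - w‖ < 1 := hnorm
  let u : Aˣ := Units.oneSub ((1 : A) - w) hnorm'
  have huval : (u : A) = w := by
    exact sub_sub_cancel 1 w
  have hkey : f * w = w * e := by
    have h1 : f * w = f * e := by
      rw [hw]
      have hh : f * ((1 - f) * (1 - e)) = (f - f * f) * (1 - e) := by noncomm_ring
      rw [mul_add, ← mul_assoc, hf', hh, hf', sub_self, zero_mul, add_zero]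
    have h2 : w * e = f * e := by
      rw [hw]
      have hh : (1 - f) * (1 - e) * e = (1 - f) * (e - e * e) := by noncomm_ring
      rw [add_mul, mul_assoc, he', hh, he', sub_self, mul_zero, add_zero]
    rw [h1, h2]
  refine ⟨u, mem_cc_one_of_norm_lt u (by rwa [huval]), ?_⟩
  have : f * (u : A) * ((u⁻¹ : Aˣ) : A) = (u : A) * e * ((u⁻¹ : Aˣ) : A) := by
    rw [huval, hkey]
  have hinv : (u : A) * ((u⁻¹ : Aˣ) : A) = 1 := u.mul_inv
  calc f = f * ((u : A) * ((u⁻¹ : Aˣ) : A)) := by rw [hinv, mul_one]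
    _ = f * (u : A) * ((u⁻¹ : Aˣ) : A) := by rw [mul_assoc]
    _ = (u : A) * e * ((u⁻¹ : Aˣ) : A) := this

/-- Zemánek's theorem: idempotents connected by a continuous path of idempotents are
similar via an invertible element of the principal component of the invertible group. -/
theorem idempotent_path_implies_similar {A : Type*} [NormedRing A] [NormedAlgebra ℂ A]
    [CompleteSpace A]
    (p q : A) (hp : IsIdempotentElem p) (hp0 : p ≠ 0) (hpni : ¬ IsUnit p)
    (γ : Path p q) (hγ : ∀ t : unitInterval, IsIdempotentElem (γ t)) :
    ∃ v : Aˣ, v ∈ connectedComponent (1 : Aˣ) ∧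
      q = (v : A) * p * ((v⁻¹ : Aˣ) : A) := by
  set S : Set unitInterval :=
    {t | ∃ v : Aˣ, v ∈ connectedComponent (1 : Aˣ) ∧
      γ t = (v : A) * p * ((v⁻¹ : Aˣ) : A)} with hS
  -- choice of quantitative neighbourhoods
  have hnbhd : ∀ t₀ : unitInterval, ∃ ε > 0, ∀ s : unitInterval,
      ‖γ s - γ t₀‖ < ε →
      ‖γ s - γ t₀‖ * (‖γ s‖ + ‖γ t₀‖) < 1 ∧
      ‖γ t₀ - γ s‖ * (‖γ t₀‖ + ‖γ s‖) < 1 := by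
    intro t₀
    set M := ‖γ t₀‖
    have hM : 0 ≤ M := norm_nonneg _
    refine ⟨min 1 (1 / (2 * M + 2)), by positivity, ?_⟩
    intro s hs
    have hε1 : ‖γ s - γ t₀‖ < 1 := lt_of_lt_of_le hs (min_le_left _ _)
    have hε2 : ‖γ s - γ t₀‖ < 1 / (2 * M + 2) := lt_of_lt_of_le hs (min_le_right _ _)
    have hγs : ‖γ s‖ ≤ M + 1 := by
      have habel : γ t₀ + (γ s - γ t₀) = γ s := by abel
      calc ‖γ s‖ = ‖γ t₀ + (γ s - γ t₀)‖ := by rw [habel]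
        _ ≤ ‖γ t₀‖ + ‖γ s - γ t₀‖ := norm_add_le _ _
        _ ≤ M + 1 := by exact add_le_add le_rfl hε1.le
    have hsum : ‖γ s‖ + ‖γ t₀‖ ≤ 2 * M + 1 := by
      have := hγs; simp only [M] at *; linarith
    have key : ‖γ s - γ t₀‖ * (‖γ s‖ + ‖γ t₀‖) < 1 := by
      calc ‖γ s - γ t₀‖ * (‖γ s‖ + ‖γ t₀‖)
          ≤ ‖γ s - γ t₀‖ * (2 * M + 1) :=
            mul_le_mul_of_nonneg_left hsum (norm_nonneg _)
        _ < (1 / (2 * M + 2)) * (2 * M + 1) := by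
            apply mul_lt_mul_of_pos_right hε2; linarith
        _ < 1 := by
            rw [div_mul_eq_mul_div, one_mul, div_lt_one (by linarith)]
            linarith
    refine ⟨key, ?_⟩
    rwa [norm_sub_rev, add_comm]
  have h0 : (0 : unitInterval) ∈ S := by
    refine ⟨1, mem_connectedComponent, ?_⟩
    simp [γ.source]
  have hopen : IsOpen S := by
    rw [isOpen_iff_mem_nhds]
    rintro t₀ ⟨v, hv, hvt⟩
    obtain ⟨ε, hε, hprop⟩ := hnbhd t₀
    have hcont : ContinuousAt γ t₀ := γ.continuous.continuousAt
    have : ∀ᶠ s in nhds t₀, ‖γ s - γ t₀‖ < ε := by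
      have := Metric.tendsto_nhds.1 hcont ε hε
      filter_upwards [this] with s hs
      rwa [dist_eq_norm] at hs
    filter_upwards [this] with s hs
    obtain ⟨w, hw, hwe⟩ := similar_of_close (γ t₀) (γ s) (hγ t₀) (hγ s) (hprop s hs).1
    refine ⟨w * v, mul_mem_connectedComponent_one hw hv, ?_⟩
    rw [hwe, hvt]
    simp [Units.val_mul, mul_inv_rev, mul_assoc]
  have hclosed : IsClosed S := by
    rw [← isOpen_compl_iff, isOpen_iff_mem_nhds]
    intro t₀ ht₀
    obtain ⟨ε, hε, hprop⟩ := hnbhd t₀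
    have hcont : ContinuousAt γ t₀ := γ.continuous.continuousAt
    have hev : ∀ᶠ s in nhds t₀, ‖γ s - γ t₀‖ < ε := by
      have := Metric.tendsto_nhds.1 hcont ε hε
      filter_upwards [this] with s hs
      rwa [dist_eq_norm] at hs
    filter_upwards [hev] with s hs hsS
    apply ht₀
    obtain ⟨v, hv, hvt⟩ := hsS
    obtain ⟨w, hw, hwe⟩ := similar_of_close (γ s) (γ t₀) (hγ s) (hγ t₀) (hprop s hs).2
    refine ⟨w * v, mul_mem_connectedComponent_one hw hv, ?_⟩
    rw [hwe, hvt]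
    simp [Units.val_mul, mul_inv_rev, mul_assoc]
  have huniv : S = Set.univ :=
    IsClopen.eq_univ ⟨hclosed, hopen⟩ ⟨0, h0⟩
  have h1 : (1 : unitInterval) ∈ S := huniv ▸ Set.mem_univ _
  obtain ⟨v, hv, hvt⟩ := h1
  exact ⟨v, hv, by rwa [γ.target] at hvt⟩
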